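/- The origin 0 is an isolated point of the fiber F⁻¹(0) (i.e., there is a neighborhood U of 0 in ℂ² such that every t ∈ U with F(t) = 0 equals 0) if and only if the holomorphic function of one variable χ ↦ ρ(0, χ) is not identically zero on any neighborhood of 0 in ℂ. (This is the equivalence (i) ⟺ (ii) of Theorem 3.3 for CR singular surfaces in ℂ²: M is the image of a totally real surface under a finite holomorphic map exactly when ρ(0, z̄) ≢ 0.) -/

import Mathlib

open Complex Filter Topology

/-- Theorem 3.3, equivalence (i) ⟺ (ii): 0 is an isolated point of F⁻¹(0)
if and only if ρ(0, ·) is not identically zero near 0. -/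
theorem stmt3 (ρ : ℂ × ℂ → ℂ)
    (hρ : ∀ᶠ x in 𝓝 (0 : ℂ × ℂ), DifferentiableAt ℂ ρ x)
    (hρ0 : ρ 0 = 0) (hdρ0 : fderiv ℂ ρ 0 = 0)
    (F : ℂ × ℂ → ℂ × ℂ)
    (hF : ∀ t : ℂ × ℂ, F t = (t.1 + I * t.2, ρ (t.1 + I * t.2, t.1 - I * t.2))) :
    (∃ U ∈ 𝓝 (0 : ℂ × ℂ), ∀ t ∈ U, F t = 0 → t = 0) ↔
      ¬ ∀ᶠ χ in 𝓝 (0 : ℂ), ρ (0, χ) = 0 := by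
  set g : ℂ → ℂ := fun χ => ρ (0, χ) with hg_def
  have hcont : Continuous (fun χ : ℂ => ((0 : ℂ), χ)) := by fun_prop
  have hg : AnalyticAt ℂ g 0 := by
    rw [analyticAt_iff_eventually_differentiableAt]
    have h0 : Tendsto (fun χ : ℂ => ((0 : ℂ), χ)) (𝓝 0) (𝓝 (0 : ℂ × ℂ)) := by
      exact hcont.tendsto 0
    filter_upwards [h0.eventually hρ] with χ hχ
    exact hχ.comp χ (DifferentiableAt.prodMk (differentiableAt_const _) differentiableAt_id)
  constructor
  · rintro ⟨U, hU, hU0⟩ hall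
    -- eventually, for small χ, the point (-I*χ, χ) lies in U and in the zero set
    have h1 : Tendsto (fun χ : ℂ => ((-I * χ, χ) : ℂ × ℂ)) (𝓝 0) (𝓝 0) := by
      have : Continuous (fun χ : ℂ => ((-I * χ, χ) : ℂ × ℂ)) := by fun_prop
      convert this.tendsto 0 using 2
      simp
      rfl
    have h2 : Tendsto (fun χ : ℂ => (-2 : ℂ) * I * χ) (𝓝 0) (𝓝 0) := by
      have : Continuous (fun χ : ℂ => (-2 : ℂ) * I * χ) := by fun_prop
      simpa using this.tendsto 0
    have h3 : ∀ᶠ χ : ℂ in 𝓝 0, χ = 0 := by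
      filter_upwards [h1.eventually hU, h2.eventually hall] with χ hχU hχ0
      have hFχ : F (-I * χ, χ) = 0 := by
        rw [hF, Prod.mk_eq_zero]
        constructor
        · show -I * χ + I * χ = 0; ring
        · show ρ (-I * χ + I * χ, -I * χ - I * χ) = 0
          rw [show -I * χ + I * χ = (0 : ℂ) from by ring,
              show -I * χ - I * χ = -2 * I * χ from by ring]
          exact hχ0
      have := hU0 _ hχU hFχ
      simpa using congrArg Prod.snd this
    have h4 : ∀ᶠ χ : ℂ in 𝓝[≠] 0, χ = 0 := h3.filter_mono nhdsWithin_le_nhds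
    obtain ⟨χ, hχ1, hχ2⟩ := (h4.and eventually_mem_nhdsWithin).exists
    exact hχ2 hχ1
  · intro hne
    rcases hg.eventually_eq_zero_or_eventually_ne_zero with h | h
    · exact absurd h hne
    · -- h : ∀ᶠ χ in 𝓝[≠] 0, g χ ≠ 0
      rw [eventually_nhdsWithin_iff] at h
      obtain ⟨W, hW, hWsub⟩ := Filter.Eventually.exists_mem h
      refine ⟨{t : ℂ × ℂ | t.1 - I * t.2 ∈ W}, ?_, ?_⟩
      · have hc : Continuous (fun t : ℂ × ℂ => t.1 - I * t.2) := by fun_prop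
        exact hc.continuousAt.preimage_mem_nhds (by simpa using hW)
      · rintro t ht hFt
        rw [hF] at hFt
        have h1 : t.1 + I * t.2 = 0 := congrArg Prod.fst hFt
        have h2 : ρ (t.1 + I * t.2, t.1 - I * t.2) = 0 := congrArg Prod.snd hFt
        rw [h1] at h2
        have hc0 : t.1 - I * t.2 = 0 := by
          by_contra hc
          exact (hWsub _ ht hc) h2
        have ht1 : t.1 = 0 := by
          have := add_add_sub_cancel (I * t.2) t.1 (I * t.2)
          -- t.1 = ((t.1 + I*t.2) + (t.1 - I*t.2))/2
          have : (2 : ℂ) * t.1 = (t.1 + I * t.2) + (t.1 - I * t.2) := by ring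
          rw [h1, hc0] at this
          simpa using this
        have ht2 : t.2 = 0 := by
          have : (2 : ℂ) * (I * t.2) = (t.1 + I * t.2) - (t.1 - I * t.2) := by ring
          rw [h1, hc0] at this
          simp only [sub_zero, mul_eq_zero] at this
          rcases this with h | h
          · norm_num at h
          · rcases h with h | h
            · exact absurd h I_ne_zero
            · exact h
        exact Prod.ext ht1 ht2
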